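/- Let G, H be finite digraphs, ξ ∈ H(G,H) a homomorphism, and T(ξ) the transitive hull of G_ξ. If H is transitive, then H(T(ξ), H) = H(G_ξ, H). If H is transitive and antisymmetric, then S(T(ξ), H) = S(G_ξ, H). Furthermore, if G and H are both finite posets, then T(ξ) is a finite poset; and if G and H are both finite irreflexive antisymmetric transitive digraphs, then so is T(ξ). -/
import Mathlib


/-- A homomorphism between digraphs `(V, A)` and `(W, B)`:
a map sending every arc to an arc. -/
def IsHom {V W : Type} (A : V → V → Prop) (B : W → W → Prop) (f : V → W) : Prop :=
  ∀ ⦃v w : V⦄, A v w → B (f v) (f w)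

/-- A strict homomorphism: a homomorphism mapping proper arcs to proper arcs. -/
def IsStrictHom {V W : Type} (A : V → V → Prop) (B : W → W → Prop) (f : V → W) : Prop :=
  IsHom A B f ∧ ∀ ⦃v w : V⦄, A v w → v ≠ w → f v ≠ f w

/-- Adjacency in a digraph. -/
def DAdj {V : Type} (A : V → V → Prop) (v w : V) : Prop := A v w ∨ A w v

/-- `v` and `w` are connected in `X`: `v = w` (with `v ∈ X`), or there is a line
`z 0, …, z I` inside `X` connecting them, consecutive members being adjacent. -/
def ConnIn {V : Type} (A : V → V → Prop) (X : Set V) (v w : V) : Prop :=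
  ∃ (I : ℕ) (z : ℕ → V), z 0 = v ∧ z I = w ∧ (∀ i ≤ I, z i ∈ X) ∧
    ∀ i < I, DAdj A (z i) (z (i + 1))

/-- `γ_X(v)`: the set of `w ∈ X` connected with `v` in `X`. -/
def gammaSet {V : Type} (A : V → V → Prop) (X : Set V) (v : V) : Set V :=
  {w | ConnIn A X v w}

/-- `Γ_ξ(v)`: the connectivity component of `v` in the preimage `ξ⁻¹(ξ(v))`. -/
def GammaComp {V W : Type} (A : V → V → Prop) (ξ : V → W) (v : V) : Set V :=
  gammaSet A {u | ξ u = ξ v} v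

/-- The set of homomorphisms `H(G,H)` (as a type). -/
def HomSet {V W : Type} (A : V → V → Prop) (B : W → W → Prop) : Type :=
  {f : V → W // IsHom A B f}

/-- The set of strict homomorphisms `S(G,H)` (as a type). -/
def StrictHomSet {V W : Type} (A : V → V → Prop) (B : W → W → Prop) : Type :=
  {f : V → W // IsStrictHom A B f}

/-- The vertex set of the digraph `G_ξ`: the components `Γ_ξ(v)`, `v ∈ V(G)`. -/
def GVert {V W : Type} (A : V → V → Prop) (ξ : V → W) : Type :=
  {C : Set V // ∃ v, C = GammaComp A ξ v}

/-- The arc relation of the digraph `G_ξ`. -/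
def GArc {V W : Type} (A : V → V → Prop) (ξ : V → W) :
    GVert A ξ → GVert A ξ → Prop :=
  fun C D => ∃ a ∈ C.1, ∃ b ∈ D.1, A a b

/-- The canonical map `π_ξ : G → G_ξ`, `v ↦ Γ_ξ(v)`. -/
def piMap {V W : Type} (A : V → V → Prop) (ξ : V → W) (v : V) : GVert A ξ :=
  ⟨GammaComp A ξ v, v, rfl⟩

/-- `Θ_{G,H'}(ξ)`: the homomorphisms `ζ : G → H'` with `G_ζ = G_ξ`
(equality of the digraphs `G_ζ` and `G_ξ`, i.e. of their vertex sets,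
which determines the arc sets). -/
def ThetaSet {V W W' : Type} (A : V → V → Prop) (B' : W' → W' → Prop)
    (ξ : V → W) : Set (V → W') :=
  {ζ | IsHom A B' ζ ∧
    {C : Set V | ∃ v, C = GammaComp A ζ v} = {C : Set V | ∃ v, C = GammaComp A ξ v}}

/-- `R ⊑_Γ S` with respect to a class `D'` of finite digraphs: a strong Γ-scheme
from `R` to `S` exists, i.e. for every finite digraph `G ∈ D'` an injective map
`ρ_G : H(G,R) → H(G,S)` with `Γ_{ρ_G(ξ)}(v) = Γ_ξ(v)` for all `ξ`, `v`. -/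
def SqGamma (D' : (V : Type) → (V → V → Prop) → Prop)
    {VR VS : Type} (R : VR → VR → Prop) (S : VS → VS → Prop) : Prop :=
  ∀ (V : Type) [Finite V] [Nonempty V] (A : V → V → Prop), D' V A →
    ∃ ρ : HomSet A R → HomSet A S, Function.Injective ρ ∧
      ∀ (ξ : HomSet A R) (v : V), GammaComp A (ρ ξ).1 v = GammaComp A ξ.1 v

/-- The class `T_a`: digraphs whose loop-removed digraph is acyclic,
i.e. every closed walk is trivial. -/
def Ta {V : Type} (A : V → V → Prop) : Prop :=
  ∀ (z : ℕ → V) (I : ℕ), 0 < I →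
    (∀ i < I, A (z i) (z (i + 1)) ∧ z i ≠ z (i + 1)) → z 0 ≠ z I

/-- A poset: a reflexive, antisymmetric, transitive digraph. -/
def IsPosetRel {V : Type} (A : V → V → Prop) : Prop :=
  Reflexive A ∧ AntiSymmetric A ∧ Transitive A

/-- An element of `P^*`: an irreflexive, antisymmetric, transitive digraph. -/
def IsStrictPosetRel {V : Type} (A : V → V → Prop) : Prop :=
  Irreflexive A ∧ AntiSymmetric A ∧ Transitive A

/-- The direct (disjoint) sum of two digraphs. -/
def sumRel {V W : Type} (A : V → V → Prop) (B : W → W → Prop) :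
    V ⊕ W → V ⊕ W → Prop
  | Sum.inl v, Sum.inl w => A v w
  | Sum.inr v, Sum.inr w => B v w
  | _, _ => False

/-- The open neighborhood `N(v)`. -/
def Nbr {Z : Type} (A : Z → Z → Prop) (v : Z) : Set Z :=
  {w | w ≠ v ∧ (A v w ∨ A w v)}

/-- The in-neighborhood `N^in(v)`. -/
def NIn {Z : Type} (A : Z → Z → Prop) (v : Z) : Set Z :=
  {w | w ≠ v ∧ A w v}

/-- The out-neighborhood `N^out(v)`. -/
def NOut {Z : Type} (A : Z → Z → Prop) (v : Z) : Set Z :=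
  {w | w ≠ v ∧ A v w}

/-- `A_r`: the arcs of `R` minus all arcs between `M` and `X`. -/
def ArRel {Z : Type} (A : Z → Z → Prop) (X M : Set Z) : Z → Z → Prop :=
  fun v w => A v w ∧ ¬(v ∈ M ∧ w ∈ X) ∧ ¬(v ∈ X ∧ w ∈ M)

/-- `A_d = { m β(x) : m x ∈ A(R) ∩ (M × X) }`. -/
def AdRel {Z : Type} (A : Z → Z → Prop) (X M : Set Z) (β : Z → Z) : Z → Z → Prop :=
  fun v w => v ∈ M ∧ ∃ x ∈ X, A v x ∧ w = β x

/-- `A_u = { β(x) m : x m ∈ A(R) ∩ (X × M) }`. -/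
def AuRel {Z : Type} (A : Z → Z → Prop) (X M : Set Z) (β : Z → Z) : Z → Z → Prop :=
  fun v w => w ∈ M ∧ ∃ x ∈ X, A x w ∧ v = β x

/-- The rearranged digraph `S`, with `A(S) = A_r ∪ A_d ∪ A_u`. -/
def SRel {Z : Type} (A : Z → Z → Prop) (X M : Set Z) (β : Z → Z) : Z → Z → Prop :=
  fun v w => ArRel A X M v w ∨ AdRel A X M β v w ∨ AuRel A X M β v w

/-- `U_ξ = { v : ξ(v) ∈ T and ξ[N_G(v)] ∩ M ≠ ∅ }` (for `T = X`; with `T = Y`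
this gives `U'_ζ`). -/
def USet {V Z : Type} (AG : V → V → Prop) (T M : Set Z) (ξ : V → Z) : Set V :=
  {v | ξ v ∈ T ∧ ∃ w ∈ Nbr AG v, ξ w ∈ M}

open Classical in
/-- The rearranged homomorphism `ρ_G(ξ)`: `β(ξ(v))` on `U_ξ` and `ξ(v)` elsewhere. -/
noncomputable def rhoMap {V Z : Type} (AG : V → V → Prop) (X M : Set Z) (β : Z → Z)
    (ξ : V → Z) : V → Z :=
  fun v => if v ∈ USet AG X M ξ then β (ξ v) else ξ v

section Aux

variable {V W : Type} {A : V → V → Prop} {B : W → W → Prop} {ξ : V → W} {X : Set V}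

lemma connIn_refl {v : V} (hv : v ∈ X) : ConnIn A X v v :=
  ⟨0, fun _ => v, rfl, rfl, fun _ _ => hv, fun i hi => absurd hi (Nat.not_lt_zero i)⟩

lemma connIn_mem_right {v w : V} (h : ConnIn A X v w) : w ∈ X := by
  obtain ⟨I, z, h0, hI, hX, _⟩ := h
  exact hI ▸ hX I le_rfl

lemma connIn_mem_left {v w : V} (h : ConnIn A X v w) : v ∈ X := by
  obtain ⟨I, z, h0, hI, hX, _⟩ := h
  exact h0 ▸ hX 0 (Nat.zero_le I)

lemma connIn_symm {v w : V} (h : ConnIn A X v w) : ConnIn A X w v := by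
  obtain ⟨I, z, h0, hI, hX, hadj⟩ := h
  refine ⟨I, fun i => z (I - i), by simpa, by simpa, fun i _ => hX _ (Nat.sub_le I i), ?_⟩
  intro i hi
  have h1 : I - (i + 1) + 1 = I - i := by omega
  have h2 := hadj (I - (i + 1)) (by omega)
  rw [h1] at h2
  rcases h2 with h2 | h2
  · exact Or.inr h2
  · exact Or.inl h2

lemma connIn_trans {v w u : V} (h : ConnIn A X v w) (h' : ConnIn A X w u) :
    ConnIn A X v u := by
  obtain ⟨I, z, h0, hI, hX, hadj⟩ := h
  obtain ⟨J, z', h0', hI', hX', hadj'⟩ := h'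
  refine ⟨I + J, fun i => if i < I then z i else z' (i - I), ?_, ?_, ?_, ?_⟩
  · by_cases hI0 : 0 < I
    · simp [hI0, h0]
    · have : I = 0 := by omega
      subst this
      simp [h0', ← hI, h0]
  · have : ¬ I + J < I := by omega
    simp [this, hI']
  · intro i hi
    by_cases hc : i < I
    · simp only [hc, if_pos]
      exact hX i hc.le
    · simp only [hc, if_neg, if_false]
      exact hX' (i - I) (by omega)
  · intro i hi
    by_cases hc : i + 1 < I
    · have hc' : i < I := by omega
      simp only [hc, hc', if_pos]
      exact hadj i hc'
    · by_cases hc' : i < I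
      · have hiI : i + 1 = I := by omega
        simp only [hc, hc', if_pos, if_neg, if_false]
        have : z' (i + 1 - I) = z (i + 1) := by
          rw [hiI]; simp [h0', hI]
        rw [this]
        exact hadj i hc'
      · simp only [hc, hc', if_neg, if_false]
        have h1 : i + 1 - I = i - I + 1 := by omega
        rw [h1]
        exact hadj' (i - I) (by omega)

lemma gammaSet_eq_of_mem {v w : V} (h : w ∈ gammaSet A X v) :
    gammaSet A X w = gammaSet A X v := by
  ext u
  exact ⟨fun hu => connIn_trans h hu, fun hu => connIn_trans (connIn_symm h) hu⟩

lemma mem_gammaComp_self (v : V) : v ∈ GammaComp A ξ v :=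
  connIn_refl rfl

lemma gammaComp_val {v w : V} (h : w ∈ GammaComp A ξ v) : ξ w = ξ v :=
  connIn_mem_right (X := {u | ξ u = ξ v}) h

lemma gammaComp_eq_of_mem {v w : V} (h : w ∈ GammaComp A ξ v) :
    GammaComp A ξ w = GammaComp A ξ v := by
  have hw : ξ w = ξ v := gammaComp_val h
  have hfib : {u | ξ u = ξ w} = {u | ξ u = ξ v} := by ext u; rw [Set.mem_setOf_eq,
    Set.mem_setOf_eq, hw]
  unfold GammaComp at h ⊢
  rw [hfib]
  exact gammaSet_eq_of_mem h

lemma mem_gammaComp_step {v a b : V} (ha : a ∈ GammaComp A ξ v) (hb : ξ b = ξ a)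
    (hadj : DAdj A a b) : b ∈ GammaComp A ξ v := by
  have haX : a ∈ {u | ξ u = ξ v} := connIn_mem_right ha
  have hbX : b ∈ {u | ξ u = ξ v} := by
    rw [Set.mem_setOf_eq, hb]; exact haX
  refine connIn_trans ha ⟨1, fun i => if i = 0 then a else b, rfl, rfl, ?_, ?_⟩
  · intro i _
    by_cases h0 : i = 0 <;> simp [h0, haX, hbX]
  · intro i hi
    have : i = 0 := by omega
    simp [this, hadj]

/-- Adjacent vertices with the same `ξ`-value lie in the same component:
the components containing them coincide. -/
lemma gvert_eq_of_arc {C D : GVert A ξ} {a b : V} (ha : a ∈ C.1) (hb : b ∈ D.1)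
    (hab : A a b) (hv : ξ b = ξ a) : C = D := by
  obtain ⟨v, hvC⟩ := C.2
  obtain ⟨w, hwD⟩ := D.2
  have ha' : a ∈ GammaComp A ξ v := hvC ▸ ha
  have hb' : b ∈ GammaComp A ξ v := mem_gammaComp_step ha' hv (Or.inl hab)
  have hb'' : b ∈ GammaComp A ξ w := hwD ▸ hb
  have h1 : GammaComp A ξ b = GammaComp A ξ v := gammaComp_eq_of_mem hb'
  have h2 : GammaComp A ξ b = GammaComp A ξ w := gammaComp_eq_of_mem hb''
  apply Subtype.ext
  rw [hvC, hwD, ← h1, ← h2]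

open Classical in
/-- The value of `ξ` on a component. -/
noncomputable def xval (A : V → V → Prop) (ξ : V → W) (C : GVert A ξ) : W :=
  ξ C.2.choose

lemma xval_eq {C : GVert A ξ} {a : V} (ha : a ∈ C.1) : ξ a = xval A ξ C := by
  have : a ∈ GammaComp A ξ C.2.choose := C.2.choose_spec ▸ ha
  exact gammaComp_val this

lemma xval_hom (hξ : IsHom A B ξ) {C D : GVert A ξ} (h : GArc A ξ C D) :
    B (xval A ξ C) (xval A ξ D) := by
  obtain ⟨a, ha, b, hb, hab⟩ := h
  rw [← xval_eq ha, ← xval_eq hb]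
  exact hξ hab

lemma xval_strict {C D : GVert A ξ} (h : GArc A ξ C D)
    (heq : xval A ξ C = xval A ξ D) : C = D := by
  obtain ⟨a, ha, b, hb, hab⟩ := h
  refine gvert_eq_of_arc ha hb hab ?_
  rw [xval_eq ha, xval_eq hb, heq]

lemma transGen_hom (hB : Transitive B) {f : GVert A ξ → W}
    (hf : IsHom (GArc A ξ) B f) {C D : GVert A ξ}
    (h : Relation.TransGen (GArc A ξ) C D) : B (f C) (f D) := by
  induction h with
  | single h1 => exact hf h1
  | tail h1 h2 ih => exact hB ih (hf h2)

lemma transGen_key (hB : Transitive B) (hAS : AntiSymmetric B) {f : GVert A ξ → W}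
    (hf : IsHom (GArc A ξ) B f)
    (hs : ∀ ⦃C D : GVert A ξ⦄, GArc A ξ C D → f C = f D → C = D)
    {C D : GVert A ξ} (h : Relation.TransGen (GArc A ξ) C D) :
    f C = f D → C = D := by
  induction h with
  | single h1 => exact fun heq => hs h1 heq
  | tail h1 h2 ih =>
    intro heq
    have h3 := hf h2
    have h4 := transGen_hom hB hf h1
    rw [heq] at h4
    have h5 := hAS h3 h4
    have hED := hs h2 h5
    have hCE := ih (heq.trans h5.symm)
    exact hCE.trans hED

end Aux

/-- For a homomorphism `ξ : G → H` and the transitive hull `T(ξ)` of `G_ξ`: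
if `H` is transitive, then `H(T(ξ),H) = H(G_ξ,H)`; if `H` is moreover
antisymmetric, then `S(T(ξ),H) = S(G_ξ,H)`; if `G` and `H` are finite posets,
then `T(ξ)` is a finite poset; and if `G` and `H` are finite irreflexive
antisymmetric transitive digraphs, then so is `T(ξ)`. -/
theorem stmt8 {V W : Type} [Finite V] [Nonempty V] [Finite W] [Nonempty W]
    (A : V → V → Prop) (B : W → W → Prop) (ξ : V → W) (hξ : IsHom A B ξ) :
    (Transitive B →
      {f : GVert A ξ → W | IsHom (Relation.TransGen (GArc A ξ)) B f} =
        {f : GVert A ξ → W | IsHom (GArc A ξ) B f}) ∧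
    (Transitive B → AntiSymmetric B →
      {f : GVert A ξ → W | IsStrictHom (Relation.TransGen (GArc A ξ)) B f} =
        {f : GVert A ξ → W | IsStrictHom (GArc A ξ) B f}) ∧
    (IsPosetRel A → IsPosetRel B → IsPosetRel (Relation.TransGen (GArc A ξ))) ∧
    (IsStrictPosetRel A → IsStrictPosetRel B →
      IsStrictPosetRel (Relation.TransGen (GArc A ξ))) := by
  refine ⟨?_, ?_, ?_, ?_⟩
  · intro hB
    ext f
    simp only [Set.mem_setOf_eq]
    constructor
    · intro hf v w h
      exact hf (Relation.TransGen.single h)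
    · intro hf v w h
      exact transGen_hom hB hf h
  · intro hB hAS
    ext f
    simp only [Set.mem_setOf_eq]
    constructor
    · intro hf
      exact ⟨fun v w h => hf.1 (Relation.TransGen.single h),
        fun v w h => hf.2 (Relation.TransGen.single h)⟩
    · intro hf
      refine ⟨fun v w h => transGen_hom hB hf.1 h, fun v w h hne heq => ?_⟩
      have hs : ∀ ⦃C D : GVert A ξ⦄, GArc A ξ C D → f C = f D → C = D := by
        intro C D hCD hfeq
        by_contra hne'
        exact hf.2 hCD hne' hfeq
      exact hne (transGen_key hB hAS hf.1 hs h heq)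
  · intro hA hB
    refine ⟨?_, ?_, fun _ _ _ h1 h2 => h1.trans h2⟩
    · intro C
      apply Relation.TransGen.single
      obtain ⟨v, hv⟩ := C.2
      have hv' : v ∈ C.1 := by rw [hv]; exact mem_gammaComp_self v
      exact ⟨v, hv', v, hv', hA.1 v⟩
    · intro C D h1 h2
      have hx1 := transGen_hom hB.2.2 (fun _ _ h => xval_hom hξ h) h1
      have hx2 := transGen_hom hB.2.2 (fun _ _ h => xval_hom hξ h) h2
      have heq := hB.2.1 hx1 hx2
      exact transGen_key hB.2.2 hB.2.1 (fun _ _ h => xval_hom hξ h) (fun _ _ h he => xval_strict h he) h1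
        heq
  · intro hA hB
    have hirr : Irreflexive (Relation.TransGen (GArc A ξ)) := by
      intro C h
      have hloop : ∀ D : GVert A ξ, ¬ GArc A ξ D D := by
        rintro D ⟨a, ha, b, hb, hab⟩
        have heq : ξ a = ξ b := (xval_eq ha).trans (xval_eq hb).symm
        have hBab := hξ hab
        rw [heq] at hBab
        exact hB.1 (ξ b) hBab
      cases h with
      | single h1 => exact hloop C h1
      | tail h1 h2 =>
        rename_i E _ _
        have hx1 := transGen_hom hB.2.2 (fun _ _ h => xval_hom hξ h) h1
        have hx2 := xval_hom hξ h2
        exact hB.1 _ (hB.2.2 hx1 hx2)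
    exact ⟨hirr, fun C D h1 h2 => absurd (h1.trans h2) (hirr C),
      fun _ _ _ h1 h2 => h1.trans h2⟩
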